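/- Assume X_{i,j} = P_{i,j} = 0 whenever dist(i,j) > R. For all i, j ∈ L and all t ∈ ℝ, writing a_{i,j} = max{0, ⌈(d_{i,j}−1)/2⌉}, one has √‖PX‖ · |C^{xx}_{i,j}(t)| ≤ ‖P‖ · τ^{2a_{i,j}+1} · cosh(τ)/(2a_{i,j}+1)!. -/

import Mathlib

/-- The ℓ²→ℓ² operator norm of a real matrix. -/
noncomputable def l2OpNorm {V : Type*} [Fintype V] [DecidableEq V] (M : Matrix V V ℝ) : ℝ :=
  ‖Matrix.toEuclideanCLM (𝕜 := ℝ) M‖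

/-- `C^{xx}_{i,j}(t) = ∑_{n≥0} (−1)^n t^{2n+1} ((PX)^n P)_{i,j}/(2n+1)!`,
which equals `i[x̂_i(t), x̂_j]` for the harmonic Hamiltonian. -/
noncomputable def Cxx {V : Type*} [Fintype V] [DecidableEq V]
    (X P : Matrix V V ℝ) (i j : V) (t : ℝ) : ℝ :=
  ∑' n : ℕ, (-1 : ℝ) ^ n * t ^ (2 * n + 1) * (((P * X) ^ n * P) i j) /
    (Nat.factorial (2 * n + 1))

lemma l2OpNorm_nonneg {V : Type*} [Fintype V] [DecidableEq V] (M : Matrix V V ℝ) :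
    0 ≤ l2OpNorm M := norm_nonneg _

lemma l2OpNorm_mul_le {V : Type*} [Fintype V] [DecidableEq V] (A B : Matrix V V ℝ) :
    l2OpNorm (A * B) ≤ l2OpNorm A * l2OpNorm B := by
  unfold l2OpNorm; rw [map_mul]; exact norm_mul_le _ _

lemma euclidean_abs_apply_le {V : Type*} [Fintype V] (x : EuclideanSpace ℝ V) (i : V) :
    |x i| ≤ ‖x‖ := by
  rw [EuclideanSpace.norm_eq, ← Real.sqrt_sq_eq_abs]
  apply Real.sqrt_le_sqrt
  have := Finset.single_le_sum (f := fun k => ‖x k‖ ^ 2) (fun k _ => sq_nonneg _)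
    (Finset.mem_univ i)
  simpa [Real.norm_eq_abs, sq_abs] using this

lemma abs_entry_le_l2OpNorm {V : Type*} [Fintype V] [DecidableEq V]
    (M : Matrix V V ℝ) (i j : V) : |M i j| ≤ l2OpNorm M := by
  have hx : (Matrix.toEuclideanCLM (𝕜 := ℝ) M) (EuclideanSpace.single j (1 : ℝ)) i = M i j := by
    rw [EuclideanSpace.single, PiLp.single, Matrix.toEuclideanCLM_toLp]
    simp [Matrix.toLin'_apply, Matrix.mulVec, dotProduct, Pi.single_apply]
  calc |M i j| = |(Matrix.toEuclideanCLM (𝕜 := ℝ) M) (EuclideanSpace.single j (1 : ℝ)) i| := by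
        rw [hx]
    _ ≤ ‖(Matrix.toEuclideanCLM (𝕜 := ℝ) M) (EuclideanSpace.single j (1 : ℝ))‖ :=
        euclidean_abs_apply_le _ _
    _ ≤ ‖Matrix.toEuclideanCLM (𝕜 := ℝ) M‖ * ‖EuclideanSpace.single j (1 : ℝ)‖ :=
        ContinuousLinearMap.le_opNorm _ _
    _ = l2OpNorm M := by rw [EuclideanSpace.norm_single, norm_one, mul_one]; rfl

lemma mul_loc {V : Type*} [Fintype V] {G : SimpleGraph V} (hconn : G.Connected)
    {A B : Matrix V V ℝ} {rA rB : ℕ}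
    (hA : ∀ i j : V, rA < G.dist i j → A i j = 0)
    (hB : ∀ i j : V, rB < G.dist i j → B i j = 0) :
    ∀ i j : V, rA + rB < G.dist i j → (A * B) i j = 0 := by
  intro i j hd
  rw [Matrix.mul_apply]
  apply Finset.sum_eq_zero
  intro k _
  rcases le_or_gt (G.dist i k) rA with h1 | h1
  · have htri := hconn.dist_triangle (u := i) (v := k) (w := j)
    have h2 : rB < G.dist k j := by omega
    rw [hB k j h2, mul_zero]
  · rw [hA i k h1, zero_mul]

/-- **Lieb-Robinson bound for local couplings**, `xx` commutator:
`√‖PX‖ · |C^{xx}_{i,j}(t)| ≤ ‖P‖ · τ^{2a+1} · cosh τ / (2a+1)!` with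
`a = max{0, ⌈(dist(i,j)/R − 1)/2⌉}` and `τ = max{√‖PX‖, √‖XP‖}·|t|`. -/
theorem lieb_robinson_local_xx {V : Type*} [Fintype V] [DecidableEq V]
    (G : SimpleGraph V) (hconn : G.Connected) (R : ℕ) (hR : 1 ≤ R)
    (X P : Matrix V V ℝ) (hX : X.IsSymm) (hP : P.IsSymm)
    (hXloc : ∀ i j : V, R < G.dist i j → X i j = 0)
    (hPloc : ∀ i j : V, R < G.dist i j → P i j = 0)
    (i j : V) (t : ℝ) :
    let τ : ℝ := max (Real.sqrt (l2OpNorm (P * X))) (Real.sqrt (l2OpNorm (X * P))) * |t|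
    let a : ℕ := (max 0 ⌈((G.dist i j : ℝ) / R - 1) / 2⌉).toNat
    Real.sqrt (l2OpNorm (P * X)) * |Cxx X P i j t| ≤
      l2OpNorm P * τ ^ (2 * a + 1) * Real.cosh τ / (Nat.factorial (2 * a + 1)) := by
  intro τ a
  have hτ0 : 0 ≤ τ :=
    mul_nonneg (le_trans (Real.sqrt_nonneg _) (le_max_left _ _)) (abs_nonneg _)
  -- locality for powers
  have hloc : ∀ n : ℕ, ∀ i' j' : V, (2 * n + 1) * R < G.dist i' j' →
      ((P * X) ^ n * P) i' j' = 0 := by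
    intro n
    induction n with
    | zero =>
      intro i' j' h
      simp only [pow_zero, one_mul]
      exact hPloc i' j' (by omega)
    | succ n ih =>
      intro i' j' h
      have hPX : ∀ i' j' : V, R + R < G.dist i' j' → (P * X) i' j' = 0 :=
        mul_loc hconn hPloc hXloc
      have hmul := mul_loc hconn hPX ih
      have heq : (P * X) ^ (n + 1) * P = (P * X) * ((P * X) ^ n * P) := by
        rw [pow_succ', mul_assoc]
      rw [heq]
      have harith : (R + R) + (2 * n + 1) * R = (2 * (n + 1) + 1) * R := by ring
      exact hmul i' j' (by omega)
  -- index bound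
  have hna : ∀ n : ℕ, n < a → (2 * n + 1) * R < G.dist i j := by
    intro n hn
    have h1 : (n : ℤ) < max 0 ⌈((G.dist i j : ℝ) / R - 1) / 2⌉ := by
      have := hn
      simp only [a] at this
      omega
    have h2 : (n : ℤ) < ⌈((G.dist i j : ℝ) / R - 1) / 2⌉ := by
      rcases lt_max_iff.mp h1 with h | h
      · omega
      · exact h
    have h3 : (n : ℝ) < ((G.dist i j : ℝ) / R - 1) / 2 := by
      exact_mod_cast Int.lt_ceil.mp h2
    have hR' : (0 : ℝ) < R := by exact_mod_cast Nat.lt_of_lt_of_le Nat.zero_lt_one hR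
    have h4 : (2 * (n : ℝ) + 1) < (G.dist i j : ℝ) / R := by linarith
    rw [lt_div_iff₀ hR'] at h4
    have h5 : ((2 * n + 1) * R : ℕ) < ((G.dist i j : ℕ) : ℝ) := by push_cast; linarith
    exact_mod_cast h5
  by_cases hs : Real.sqrt (l2OpNorm (P * X)) = 0
  · rw [hs, zero_mul]
    apply div_nonneg _ (Nat.cast_nonneg _)
    exact mul_nonneg (mul_nonneg (l2OpNorm_nonneg _) (pow_nonneg hτ0 _)) (Real.cosh_pos τ).le
  have hs0 : 0 < Real.sqrt (l2OpNorm (P * X)) :=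
    lt_of_le_of_ne (Real.sqrt_nonneg _) (Ne.symm hs)
  set s : ℝ := Real.sqrt (l2OpNorm (P * X)) with hs_def
  have hsτ : s * |t| ≤ τ := mul_le_mul_of_nonneg_right (le_max_left _ _) (abs_nonneg _)
  have hs2 : s ^ 2 = l2OpNorm (P * X) := Real.sq_sqrt (l2OpNorm_nonneg _)
  set c : ℕ → ℝ := fun n => (-1 : ℝ) ^ n * t ^ (2 * n + 1) * (((P * X) ^ n * P) i j) /
    (Nat.factorial (2 * n + 1)) with hc
  have hCxx : Cxx X P i j t = ∑' n, c n := rfl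
  set C : ℝ := l2OpNorm P * τ ^ (2 * a + 1) / (Nat.factorial (2 * a + 1)) with hC
  set g : ℕ → ℝ := fun m => τ ^ (2 * m) / (Nat.factorial (2 * m)) with hg
  set f : ℕ → ℝ := fun n => C * (if a ≤ n then g (n - a) else 0) with hf
  have hC0 : 0 ≤ C :=
    div_nonneg (mul_nonneg (l2OpNorm_nonneg _) (pow_nonneg hτ0 _)) (Nat.cast_nonneg _)
  have hg_sum : Summable g := (Real.hasSum_cosh τ).summable
  have hg_tsum : ∑' m, g m = Real.cosh τ := (Real.hasSum_cosh τ).tsum_eq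
  have hshift : Summable (fun n => if a ≤ n then g (n - a) else 0) := by
    apply (summable_nat_add_iff a).mp
    simpa using hg_sum
  have hf_sum : Summable f := hshift.mul_left C
  -- powers norm bound
  have hpow : ∀ n : ℕ, l2OpNorm ((P * X) ^ n * P) ≤ (l2OpNorm (P * X)) ^ n * l2OpNorm P := by
    intro n
    induction n with
    | zero => simp
    | succ n ih =>
      have heq : (P * X) ^ (n + 1) * P = (P * X) * ((P * X) ^ n * P) := by
        rw [pow_succ', mul_assoc]
      rw [heq]
      calc l2OpNorm ((P * X) * ((P * X) ^ n * P)) ≤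
          l2OpNorm (P * X) * l2OpNorm ((P * X) ^ n * P) := l2OpNorm_mul_le _ _
        _ ≤ l2OpNorm (P * X) * ((l2OpNorm (P * X)) ^ n * l2OpNorm P) :=
            mul_le_mul_of_nonneg_left ih (l2OpNorm_nonneg _)
        _ = (l2OpNorm (P * X)) ^ (n + 1) * l2OpNorm P := by ring
  have hzero : ∀ n : ℕ, n < a → c n = 0 := by
    intro n hn
    simp only [hc]
    rw [hloc n i j (hna n hn)]
    simp
  have hkey : ∀ n : ℕ, s * |c n| ≤ f n := by
    intro n
    by_cases hn : a ≤ n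
    · have hfn : f n = l2OpNorm P * τ ^ (2 * a + 1) / (Nat.factorial (2 * a + 1)) *
          (τ ^ (2 * (n - a)) / (Nat.factorial (2 * (n - a)))) := by
        simp only [hf, hC, hg, if_pos hn]
      have hcabs : |c n| = |t| ^ (2 * n + 1) * |((P * X) ^ n * P) i j| /
          (Nat.factorial (2 * n + 1)) := by
        simp only [hc]
        rw [abs_div, abs_mul, abs_mul, abs_pow, abs_pow, abs_neg, abs_one, one_pow, one_mul,
          Nat.abs_cast]
      have hE : |((P * X) ^ n * P) i j| ≤ (s ^ 2) ^ n * l2OpNorm P := by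
        calc |((P * X) ^ n * P) i j| ≤ l2OpNorm ((P * X) ^ n * P) :=
              abs_entry_le_l2OpNorm _ _ _
          _ ≤ (l2OpNorm (P * X)) ^ n * l2OpNorm P := hpow n
          _ = (s ^ 2) ^ n * l2OpNorm P := by rw [hs2]
      have hfact_pos : (0 : ℝ) < (Nat.factorial (2 * n + 1) : ℝ) := by
        exact_mod_cast Nat.factorial_pos _
      have step1 : s * |c n| ≤ l2OpNorm P * (s * |t|) ^ (2 * n + 1) /
          (Nat.factorial (2 * n + 1)) := by
        rw [hcabs, ← mul_div_assoc]
        apply (div_le_div_iff_of_pos_right hfact_pos).mpr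
        calc s * (|t| ^ (2 * n + 1) * |((P * X) ^ n * P) i j|)
            ≤ s * (|t| ^ (2 * n + 1) * ((s ^ 2) ^ n * l2OpNorm P)) := by
              apply mul_le_mul_of_nonneg_left _ hs0.le
              exact mul_le_mul_of_nonneg_left hE (by positivity)
          _ = l2OpNorm P * (s * |t|) ^ (2 * n + 1) := by rw [mul_pow]; ring
      have step2 : l2OpNorm P * (s * |t|) ^ (2 * n + 1) / (Nat.factorial (2 * n + 1)) ≤
          l2OpNorm P * τ ^ (2 * n + 1) / (Nat.factorial (2 * n + 1)) := by
        apply (div_le_div_iff_of_pos_right hfact_pos).mpr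
        exact mul_le_mul_of_nonneg_left
          (pow_le_pow_left₀ (mul_nonneg hs0.le (abs_nonneg t)) hsτ _) (l2OpNorm_nonneg _)
      have hfact : ((Nat.factorial (2 * a + 1) * Nat.factorial (2 * (n - a)) : ℕ) : ℝ) ≤
          ((Nat.factorial (2 * n + 1) : ℕ) : ℝ) := by
        have hdvd := Nat.factorial_mul_factorial_dvd_factorial_add (2 * a + 1) (2 * (n - a))
        have h2 : 2 * a + 1 + 2 * (n - a) = 2 * n + 1 := by omega
        rw [h2] at hdvd
        exact_mod_cast Nat.le_of_dvd (Nat.factorial_pos _) hdvd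
      have step3 : l2OpNorm P * τ ^ (2 * n + 1) / (Nat.factorial (2 * n + 1)) ≤ f n := by
        rw [hfn, div_mul_div_comm]
        have hτpow : τ ^ (2 * a + 1) * τ ^ (2 * (n - a)) = τ ^ (2 * n + 1) := by
          rw [← pow_add]; congr 1; omega
        rw [mul_assoc, hτpow]
        apply div_le_div_of_nonneg_left (mul_nonneg (l2OpNorm_nonneg _) (pow_nonneg hτ0 _)) (by positivity)
        exact_mod_cast hfact
      exact le_trans step1 (le_trans step2 step3)
    · rw [hzero n (lt_of_not_ge hn)]
      simp [hf, hn, hC0]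
  have hsc_sum : Summable (fun n => s * |c n|) :=
    Summable.of_nonneg_of_le (fun n => mul_nonneg hs0.le (abs_nonneg _)) hkey hf_sum
  have hc_sum : Summable (fun n => |c n|) := by
    have h1 := hsc_sum.mul_left s⁻¹
    have heq : (fun n => s⁻¹ * (s * |c n|)) = fun n => |c n| := by
      funext n; rw [← mul_assoc, inv_mul_cancel₀ hs, one_mul]
    rwa [heq] at h1
  calc s * |Cxx X P i j t| ≤ s * ∑' n, |c n| := by
        apply mul_le_mul_of_nonneg_left _ hs0.le
        rw [hCxx]
        simpa [Real.norm_eq_abs] using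
          norm_tsum_le_tsum_norm (f := c) (by simpa [Real.norm_eq_abs] using hc_sum)
    _ = ∑' n, s * |c n| := tsum_mul_left.symm
    _ ≤ ∑' n, f n := Summable.tsum_le_tsum hkey hsc_sum hf_sum
    _ = C * ∑' n, (if a ≤ n then g (n - a) else 0) := tsum_mul_left
    _ = C * Real.cosh τ := by
        congr 1
        rw [← Summable.sum_add_tsum_nat_add a hshift]
        have h1 : (∑ k ∈ Finset.range a, (if a ≤ k then g (k - a) else 0)) = 0 := by
          apply Finset.sum_eq_zero
          intro k hk
          have hk' := Finset.mem_range.mp hk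
          rw [if_neg (by omega)]
        have h2 : (∑' n : ℕ, (if a ≤ n + a then g (n + a - a) else 0)) = Real.cosh τ := by
          rw [← hg_tsum]
          congr 1
          funext n
          simp
        rw [h1, h2, zero_add]
    _ = l2OpNorm P * τ ^ (2 * a + 1) * Real.cosh τ / (Nat.factorial (2 * a + 1)) := by
        rw [hC]; ring
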